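/- Let k(x) ∈ ℝ[[x]] be invertible with nonzero coefficient of x, let μ ∈ ℝ*, set h(x) = μ·(1/k(x))', and define P_K(f) = k·∫₀ˣ(h·f) on ℝ[[x]] (termwise integration). Then for all n ≥ 0, P_K^n(1) = μⁿ·(k(x)/k(0))·Σ_{s≥n} ln^s(k(0)/k(x))/s!, where ln(k(0)/k(x)) denotes the formal power series logarithm (which has lowest degree term of degree 1); in particular P_K^n(1) ∈ xⁿℝ[[x]] \ xⁿ⁺¹ℝ[[x]]. -/

import Mathlib

open PowerSeries

/-- Termwise integration on `ℝ⟦X⟧`. -/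
noncomputable def integ (f : ℝ⟦X⟧) : ℝ⟦X⟧ :=
  PowerSeries.mk fun n => if n = 0 then 0 else (PowerSeries.coeff (n - 1) f) / n

/-- The formal logarithm of a power series `g` (with constant term `1`):
the antiderivative of `g'/g` vanishing at `0`. -/
noncomputable def lnSeries (g : ℝ⟦X⟧) : ℝ⟦X⟧ := integ (derivativeFun g * g⁻¹)

/-- The tail `Σ_{s≥n} L^s/s!` of the exponential series of `L` (of positive order),
defined coefficientwise. -/
noncomputable def tailExp (L : ℝ⟦X⟧) (n : ℕ) : ℝ⟦X⟧ :=
  PowerSeries.mk fun m => ∑ s ∈ Finset.Icc n m, PowerSeries.coeff m (L ^ s) / s.factorial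

/-- `P_K(f) = k·∫₀ˣ(h·f)`. -/
noncomputable def PK (k h f : ℝ⟦X⟧) : ℝ⟦X⟧ := k * integ (h * f)

lemma myDerivEq (f : ℝ⟦X⟧) : d⁄dX ℝ f = derivativeFun f := rfl

lemma coeff_derivativeFun' (f : ℝ⟦X⟧) (n : ℕ) :
    PowerSeries.coeff n (derivativeFun f) = PowerSeries.coeff (n + 1) f * (n + 1) :=
  coeff_derivative f n

lemma derivativeFun_C' (r : ℝ) : derivativeFun (PowerSeries.C r : ℝ⟦X⟧) = 0 := derivative_C

lemma constantCoeff_integ (f : ℝ⟦X⟧) : constantCoeff (integ f) = 0 := by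
  have := coeff_mk (R := ℝ) 0 (fun n => if n = 0 then 0 else (PowerSeries.coeff (n - 1) f) / n)
  simp only [← coeff_zero_eq_constantCoeff_apply]
  simpa [integ] using this

lemma derivativeFun_integ (f : ℝ⟦X⟧) : derivativeFun (integ f) = f := by
  ext n
  rw [coeff_derivativeFun', integ, coeff_mk]
  have : ((n:ℝ) + 1) ≠ 0 := by positivity
  simp only [Nat.add_one_ne_zero, if_false, Nat.add_sub_cancel, Nat.cast_add, Nat.cast_one]
  field_simp

lemma integ_smul (c : ℝ) (f : ℝ⟦X⟧) : integ (c • f) = c • integ f := by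
  ext n
  simp only [integ, coeff_mk, coeff_smul, smul_eq_mul]
  split_ifs <;> ring

lemma coeff_pow_zero (L : ℝ⟦X⟧) (hL : constantCoeff L = 0) {m s : ℕ} (h : m < s) :
    PowerSeries.coeff m (L ^ s) = 0 := by
  have hX : (X : ℝ⟦X⟧) ^ s ∣ L ^ s := pow_dvd_pow_of_dvd (X_dvd_iff.mpr hL) s
  exact (X_pow_dvd_iff.mp hX) m h

noncomputable def partExp (L : ℝ⟦X⟧) (n N : ℕ) : ℝ⟦X⟧ :=
  ∑ s ∈ Finset.Icc n N, ((s.factorial : ℝ))⁻¹ • L ^ s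

lemma coeff_tailExp_eq (L : ℝ⟦X⟧) (hL : constantCoeff L = 0) (n N m : ℕ) (h : m ≤ N) :
    PowerSeries.coeff m (tailExp L n) = PowerSeries.coeff m (partExp L n N) := by
  rw [tailExp, coeff_mk, partExp, map_sum]
  rw [Finset.sum_subset (Finset.Icc_subset_Icc_right h)]
  · apply Finset.sum_congr rfl
    intro s _
    rw [coeff_smul, smul_eq_mul, div_eq_inv_mul]
  · intro s hs hns
    have hm : m < s := by
      simp only [Finset.mem_Icc] at hs hns
      omega
    rw [coeff_pow_zero L hL hm, zero_div]

lemma deriv_partExp (L : ℝ⟦X⟧) (n N : ℕ) :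
    derivativeFun (partExp L (n + 1) (N + 1)) = derivativeFun L * partExp L n N := by
  have : partExp L (n+1) (N+1) = ∑ s ∈ Finset.Icc n N, ((s+1).factorial : ℝ)⁻¹ • L ^ (s+1) := by
    rw [partExp, ← Finset.map_add_right_Icc n N 1]
    rw [Finset.sum_map]
    rfl
  rw [this, ← myDerivEq, map_sum, partExp, Finset.mul_sum]
  apply Finset.sum_congr rfl
  intro s _
  rw [Derivation.map_smul, Derivation.leibniz_pow, ← Nat.cast_smul_eq_nsmul ℝ]
  simp only [Nat.add_sub_cancel, myDerivEq, smul_smul, smul_eq_mul]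
  rw [mul_smul_comm]
  congr 1
  · rw [Nat.factorial_succ]
    have h1 : (s.factorial : ℝ) ≠ 0 := Nat.cast_ne_zero.mpr s.factorial_ne_zero
    have h2 : ((s:ℝ) + 1) ≠ 0 := by positivity
    push_cast
    field_simp
  · ring

lemma deriv_tailExp (L : ℝ⟦X⟧) (hL : constantCoeff L = 0) (n : ℕ) :
    derivativeFun (tailExp L (n + 1)) = derivativeFun L * tailExp L n := by
  ext m
  rw [coeff_derivativeFun',
    coeff_tailExp_eq L hL (n+1) (m+1) (m+1) le_rfl,
    ← coeff_derivativeFun', deriv_partExp]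
  rw [coeff_mul, coeff_mul]
  apply Finset.sum_congr rfl
  intro p hp
  have h2 : p.2 ≤ m := by
    have := Finset.HasAntidiagonal.mem_antidiagonal.mp hp
    omega
  rw [coeff_tailExp_eq L hL n m p.2 h2]

lemma coeff_tailExp_of_lt (L : ℝ⟦X⟧) {n m : ℕ} (h : m < n) :
    PowerSeries.coeff m (tailExp L n) = 0 := by
  rw [tailExp, coeff_mk, Finset.Icc_eq_empty (by omega), Finset.sum_empty]

lemma constantCoeff_tailExp_succ (L : ℝ⟦X⟧) (n : ℕ) :
    constantCoeff (tailExp L (n + 1)) = 0 := by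
  rw [← coeff_zero_eq_constantCoeff_apply]
  exact coeff_tailExp_of_lt L n.succ_pos

lemma tailExp_succ_eq_integ (L : ℝ⟦X⟧) (hL : constantCoeff L = 0) (n : ℕ) :
    tailExp L (n + 1) = integ (derivativeFun L * tailExp L n) := by
  apply derivative.ext (R := ℝ)
  · rw [myDerivEq, myDerivEq, deriv_tailExp L hL n, derivativeFun_integ]
  · rw [constantCoeff_tailExp_succ, constantCoeff_integ]

lemma tailExp_zero_split (L : ℝ⟦X⟧) : tailExp L 0 = 1 + tailExp L 1 := by
  ext m
  rw [tailExp, coeff_mk, map_add, tailExp, coeff_mk]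
  have : Finset.Icc 0 m = insert 0 (Finset.Icc 1 m) := by
    ext s; simp [Finset.mem_Icc, Nat.lt_iff_add_one_le]; omega
  rw [this, Finset.sum_insert (by simp)]
  simp [Nat.factorial_zero]

lemma ode_unique (a f g : ℝ⟦X⟧) (hf : derivativeFun f = a * f) (hg : derivativeFun g = a * g)
    (h0 : constantCoeff f = constantCoeff g) : f = g := by
  ext m
  induction m using Nat.strong_induction_on with
  | _ m ih =>
    match m with
    | 0 => simpa using h0
    | m + 1 =>
      have key : PowerSeries.coeff (m+1) f * (m+1) = PowerSeries.coeff (m+1) g * (m+1) := by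
        rw [← coeff_derivativeFun', ← coeff_derivativeFun', hf, hg, coeff_mul, coeff_mul]
        apply Finset.sum_congr rfl
        intro p hp
        have h2 : p.2 ≤ m := by
          have := Finset.HasAntidiagonal.mem_antidiagonal.mp hp
          omega
        rw [ih p.2 (by omega)]
      have : ((m:ℝ) + 1) ≠ 0 := by positivity
      exact mul_right_cancel₀ (by exact_mod_cast this) key

lemma deriv_tailExp_zero (L : ℝ⟦X⟧) (hL : constantCoeff L = 0) :
    derivativeFun (tailExp L 0) = derivativeFun L * tailExp L 0 := by
  conv_lhs => rw [tailExp_zero_split]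
  rw [derivativeFun_add, derivativeFun_one, zero_add, deriv_tailExp L hL 0]

lemma constantCoeff_tailExp_zero (L : ℝ⟦X⟧) : constantCoeff (tailExp L 0) = 1 := by
  rw [tailExp_zero_split, map_add, map_one, constantCoeff_tailExp_succ, add_zero]

lemma coeff_pow_self (L : ℝ⟦X⟧) (hL : constantCoeff L = 0) (n : ℕ) :
    PowerSeries.coeff n (L ^ n) = (PowerSeries.coeff 1 L) ^ n := by
  induction n with
  | zero => simp
  | succ n ih =>
    rw [pow_succ, coeff_mul]
    rw [Finset.sum_eq_single_of_mem (n, 1) (by simp)]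
    · rw [ih, pow_succ]
    · intro p hp hne
      have hsum := Finset.HasAntidiagonal.mem_antidiagonal.mp hp
      rcases lt_trichotomy p.1 n with hlt | heq | hgt
      · rw [coeff_pow_zero L hL hlt, zero_mul]
      · exfalso; apply hne; have : p.2 = 1 := by omega
        exact Prod.ext heq this
      · have h1 : p.2 = 0 := by omega
        rw [h1, coeff_zero_eq_constantCoeff, hL, mul_zero]

/-- For `k` invertible with nonzero linear coefficient, `μ ≠ 0` and `h = μ·(1/k)'`,
one has `P_K^n(1) = μⁿ·(k/k(0))·Σ_{s≥n} lnˢ(k(0)/k)/s!`, and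
`P_K^n(1) ∈ xⁿℝ[[x]] \ xⁿ⁺¹ℝ[[x]]`. -/
theorem stmt19 (k : ℝ⟦X⟧) (hk0 : constantCoeff k ≠ 0)
    (hk1 : PowerSeries.coeff 1 k ≠ 0) (μ : ℝ) (hμ : μ ≠ 0)
    (h : ℝ⟦X⟧) (hh : h = μ • derivativeFun (k⁻¹)) :
    ∀ n : ℕ,
      (PK k h)^[n] 1 =
        (μ ^ n / constantCoeff k) •
          (k * tailExp (lnSeries (PowerSeries.C (constantCoeff k) * k⁻¹)) n) ∧
      (X : ℝ⟦X⟧) ^ n ∣ (PK k h)^[n] 1 ∧ ¬ (X : ℝ⟦X⟧) ^ (n + 1) ∣ (PK k h)^[n] 1 := by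
  set k0 := constantCoeff k with hk0def
  set g : ℝ⟦X⟧ := PowerSeries.C k0 * k⁻¹ with hgdef
  set L : ℝ⟦X⟧ := lnSeries g with hLdef
  have hkinv : k * k⁻¹ = 1 := PowerSeries.mul_inv_cancel k hk0
  have hg0 : constantCoeff g = 1 := by
    rw [hgdef, map_mul, constantCoeff_C, PowerSeries.constantCoeff_inv, mul_inv_cancel₀ hk0]
  have hginv : g * g⁻¹ = 1 := PowerSeries.mul_inv_cancel g (by rw [hg0]; exact one_ne_zero)
  have hL0 : constantCoeff L = 0 := constantCoeff_integ _
  have hgderiv : derivativeFun g = (derivativeFun k⁻¹ * k) * g := by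
    rw [hgdef, derivativeFun_mul, derivativeFun_C', smul_zero, add_zero, smul_eq_mul]
    calc PowerSeries.C k0 * derivativeFun k⁻¹
        = derivativeFun k⁻¹ * PowerSeries.C k0 * (k * k⁻¹) := by rw [hkinv]; ring
      _ = (derivativeFun k⁻¹ * k) * (PowerSeries.C k0 * k⁻¹) := by ring
  have hL' : derivativeFun L = derivativeFun k⁻¹ * k := by
    rw [hLdef, lnSeries, derivativeFun_integ, hgderiv]
    rw [mul_assoc, hginv, mul_one]
  have hExpDeriv : derivativeFun (tailExp L 0) = derivativeFun L * tailExp L 0 :=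
    deriv_tailExp_zero L hL0
  have hgDeriv2 : derivativeFun g = derivativeFun L * g := by rw [hL', hgderiv]
  have hExp : tailExp L 0 = g :=
    ode_unique (derivativeFun L) _ _ hExpDeriv hgDeriv2
      (by rw [constantCoeff_tailExp_zero, hg0])
  -- coefficient 1 of L is nonzero
  have hkinv0 : constantCoeff k⁻¹ = k0⁻¹ := PowerSeries.constantCoeff_inv k
  have hcoeff1inv : PowerSeries.coeff 1 k⁻¹ ≠ 0 := by
    have h1 : PowerSeries.coeff 1 (k * k⁻¹) = 0 := by rw [hkinv, coeff_one]; simp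
    rw [coeff_mul] at h1
    have hanti : (Finset.HasAntidiagonal.antidiagonal 1 : Finset (ℕ × ℕ)) = {(0, 1), (1, 0)} := by decide
    rw [hanti, Finset.sum_insert (by decide), Finset.sum_singleton] at h1
    intro hzero
    rw [hzero] at h1
    simp only [coeff_zero_eq_constantCoeff, hkinv0, mul_zero, zero_add] at h1
    rcases mul_eq_zero.mp h1 with h2 | h2
    · exact hk1 h2
    · exact inv_ne_zero hk0 h2
  have hcoeff1L : PowerSeries.coeff 1 L ≠ 0 := by
    have hd : PowerSeries.coeff 0 (derivativeFun L) = PowerSeries.coeff 1 L := by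
      rw [coeff_derivativeFun']; norm_num
    rw [hL', coeff_zero_eq_constantCoeff, map_mul] at hd
    have h0d : constantCoeff (derivativeFun k⁻¹) = PowerSeries.coeff 1 k⁻¹ := by
      rw [← coeff_zero_eq_constantCoeff_apply, coeff_derivativeFun']; norm_num
    rw [h0d] at hd
    rw [← hd]
    exact mul_ne_zero hcoeff1inv hk0
  -- the main formula by induction
  have main : ∀ n : ℕ, (PK k h)^[n] 1 = (μ ^ n / k0) • (k * tailExp L n) := by
    intro n
    induction n with
    | zero =>
      simp only [Function.iterate_zero, id_eq, pow_zero]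
      rw [hExp, hgdef]
      calc (1:ℝ⟦X⟧) = (1 / k0) • PowerSeries.C k0 := by
            rw [smul_eq_C_mul, ← map_mul, one_div, inv_mul_cancel₀ hk0, map_one]
        _ = (1 / k0) • (k * (PowerSeries.C k0 * k⁻¹)) := by
            rw [show k * (PowerSeries.C k0 * k⁻¹) = PowerSeries.C k0 * (k * k⁻¹) by ring,
              hkinv, mul_one]
    | succ n ih =>
      rw [Function.iterate_succ_apply', ih, PK]
      have step1 : h * ((μ ^ n / k0) • (k * tailExp L n))
          = ((μ ^ n / k0) * μ) • (derivativeFun L * tailExp L n) := by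
        rw [hh, hL']
        rw [smul_mul_assoc, mul_smul_comm, smul_smul]
        rw [mul_comm μ (μ ^ n / k0), mul_assoc]
      rw [step1, integ_smul, ← tailExp_succ_eq_integ L hL0 n, mul_smul_comm]
      congr 1
      field_simp
      ring
  intro n
  refine ⟨main n, ?_, ?_⟩
  · rw [main n]
    rw [X_pow_dvd_iff]
    intro m hm
    rw [coeff_smul, smul_eq_mul, coeff_mul]
    rw [Finset.sum_eq_zero, mul_zero]
    intro p hp
    have h2 : p.2 < n := by
      have := Finset.HasAntidiagonal.mem_antidiagonal.mp hp
      omega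
    rw [coeff_tailExp_of_lt L h2, mul_zero]
  · intro hdvd
    have hz : PowerSeries.coeff n ((PK k h)^[n] 1) = 0 :=
      X_pow_dvd_iff.mp hdvd n (by omega)
    rw [main n, coeff_smul, smul_eq_mul, coeff_mul] at hz
    rw [Finset.sum_eq_single_of_mem (0, n) (by simp)] at hz
    · have hTn : PowerSeries.coeff n (tailExp L n) = (PowerSeries.coeff 1 L) ^ n / n.factorial := by
        rw [tailExp, coeff_mk, Finset.Icc_self, Finset.sum_singleton, coeff_pow_self L hL0]
      rw [hTn, coeff_zero_eq_constantCoeff] at hz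
      have hfact : (n.factorial : ℝ) ≠ 0 := Nat.cast_ne_zero.mpr n.factorial_ne_zero
      rcases mul_eq_zero.mp hz with h1 | h1
      · exact (div_ne_zero (pow_ne_zero n hμ) hk0) h1
      · rcases mul_eq_zero.mp h1 with h2 | h2
        · exact hk0 h2
        · exact (div_ne_zero (pow_ne_zero n hcoeff1L) hfact) h2
    · intro p hp hne
      have hsum := Finset.HasAntidiagonal.mem_antidiagonal.mp hp
      have h2 : p.2 < n := by
        rcases Nat.lt_or_ge p.2 n with hlt | hge
        · exact hlt
        · exfalso; apply hne
          have : p.2 = n := by omega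
          exact Prod.ext (by omega) this
      rw [coeff_tailExp_of_lt L h2, mul_zero]
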